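/- arXiv:2011.14664 — 2 statements merged into one kernel-verified Lean document; each statement's English description precedes it below -/
import Mathlib

section
/- For a stationary, strictly positive (every finite cylinder has positive probability) stochastic process (X_n)_{n in Z} with values in a finite set E, the Markov field property on Z (inside of every finite interval conditionally independent of the outside given the two boundary sites) implies the Markov chain property. -/
open MeasureTheory ProbabilityTheory

def cylSigma (E : Type*) [MeasurableSpace E] (S : Set ℤ) : MeasurableSpace (ℤ → E) :=
  MeasurableSpace.comap (fun ω (i : S) => ω (i : ℤ)) MeasurableSpace.pi

lemma cylSigma_le (E : Type*) [MeasurableSpace E] (S : Set ℤ) :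
    cylSigma E S ≤ MeasurableSpace.pi :=
  (measurable_pi_lambda _ fun _ => measurable_pi_apply _).comap_le

namespace MFC
set_option linter.unusedSectionVars false
variable {E : Type*} [Fintype E] [Nonempty E]
  [TopologicalSpace E] [DiscreteTopology E] [MeasurableSpace E] [BorelSpace E]
  (μ : Measure (ℤ → E)) [IsProbabilityMeasure μ]

def pt (j : ℤ) (x : E) : Set (ℤ → E) := {ω | ω j = x}
def cylF (F : Finset ℤ) (e : ℤ → E) : Set (ℤ → E) := {ω | ∀ k ∈ F, ω k = e k}

lemma measurableSet_pt (j : ℤ) (x : E) : MeasurableSet (pt j x : Set (ℤ → E)) := by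
  have : (pt j x : Set (ℤ → E)) = (fun ω : ℤ → E => ω j) ⁻¹' {x} := rfl
  rw [this]
  exact (measurable_pi_apply j) (measurableSet_singleton x)

lemma cylF_eq_iInter (F : Finset ℤ) (e : ℤ → E) :
    cylF F e = ⋂ k ∈ F, pt k (e k) := by ext ω; simp [cylF, pt]

lemma measurableSet_cylF (F : Finset ℤ) (e : ℤ → E) :
    MeasurableSet (cylF F e) := by
  rw [cylF_eq_iInter]
  exact MeasurableSet.biInter F.countable_toSet fun k _ => measurableSet_pt k (e k)

lemma pt_mem_cylSigma {S : Set ℤ} {j : ℤ} (hj : j ∈ S) (x : E) :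
    MeasurableSet[cylSigma E S] (pt j x) := by
  refine ⟨(fun σ : S → E => σ ⟨j, hj⟩) ⁻¹' {x}, ?_, rfl⟩
  exact (measurable_pi_apply _) (measurableSet_singleton x)

lemma cylF_mem_cylSigma {S : Set ℤ} {F : Finset ℤ} (hF : ↑F ⊆ S) (e : ℤ → E) :
    MeasurableSet[cylSigma E S] (cylF F e) := by
  rw [cylF_eq_iInter]
  exact MeasurableSet.biInter F.countable_toSet fun k hk => pt_mem_cylSigma (hF hk) (e k)

noncomputable def atomExt (F : Finset ℤ) (v : {x // x ∈ F} → E) : ℤ → E :=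
  fun k => if h : k ∈ F then v ⟨k, h⟩ else Classical.arbitrary E

/-- the atom of the partition -/
noncomputable def atomC (F : Finset ℤ) (v : {x // x ∈ F} → E) : Set (ℤ → E) :=
  cylF F (atomExt F v)

lemma mem_atomC {F : Finset ℤ} {v : {x // x ∈ F} → E} {ω : ℤ → E} :
    ω ∈ atomC F v ↔ ∀ i : {x // x ∈ F}, ω i = v i := by
  constructor
  · intro h i
    have := h i.1 i.2
    simpa [atomExt, i.2] using this
  · intro h k hk
    have := h ⟨k, hk⟩
    simpa [atomExt, hk] using this

lemma atomC_of_mem {F : Finset ℤ} {v : {x // x ∈ F} → E} {ω : ℤ → E}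
    (hω : ω ∈ atomC F v) : atomC F v = cylF F ω := by
  ext ω'
  rw [mem_atomC]
  constructor
  · intro h k hk
    rw [h ⟨k, hk⟩, ← (mem_atomC.1 hω) ⟨k, hk⟩]
  · intro h i
    rw [h i.1 i.2, (mem_atomC.1 hω) i]

lemma atomC_disjoint {F : Finset ℤ} : Pairwise (Function.onFun Disjoint (atomC (E := E) F)) := by
  intro v w hvw
  refine Set.disjoint_left.2 fun ω h1 h2 => ?_
  apply hvw
  funext i
  rw [← mem_atomC.1 h1 i, mem_atomC.1 h2 i]

lemma atomC_cover (F : Finset ℤ) (ω : ℤ → E) : ω ∈ atomC F (fun i => ω i) :=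
  mem_atomC.2 fun _ => rfl

lemma pr_atom_sum {F : Finset ℤ} {u : Set (ℤ → E)} (hu : MeasurableSet u) :
    μ u = ∑ v : {x // x ∈ F} → E, μ (u ∩ atomC F v) := by
  have hunion : u = ⋃ v : {x // x ∈ F} → E, (u ∩ atomC F v) := by
    ext ω
    simp only [Set.mem_iUnion, Set.mem_inter_iff]
    exact ⟨fun h => ⟨fun i => ω i, h, atomC_cover F ω⟩, fun ⟨v, h, _⟩ => h⟩
  conv_lhs => rw [hunion]
  rw [measure_iUnion (fun v w h => (atomC_disjoint h).mono (Set.inter_subset_right)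
      (Set.inter_subset_right)) (fun v => hu.inter (measurableSet_cylF _ _)), tsum_fintype]

/-- conditional expectation of an indicator w.r.t. a finite cylinder σ-algebra -/
lemma condexp_cylF
    (hpos : ∀ (G : Finset ℤ) (e : ℤ → E), 0 < μ (cylF G e))
    (F : Finset ℤ) {s : Set (ℤ → E)} (hs : MeasurableSet s) :
    (μ⟦s | cylSigma E ↑F⟧) =ᵐ[μ]
      fun ω => (μ (s ∩ cylF F ω)).toReal / (μ (cylF F ω)).toReal := by
  have hm' : cylSigma E (↑F : Set ℤ) ≤ MeasurableSpace.pi := cylSigma_le E ↑F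
  set r : ({x // x ∈ F} → E) → ℝ :=
    fun v => (μ (s ∩ atomC F v)).toReal / (μ (atomC F v)).toReal with hr
  set g : (ℤ → E) → ℝ :=
    fun ω => ∑ v : {x // x ∈ F} → E, (atomC F v).indicator (fun _ => r v) ω with hg
  have hgpt : ∀ ω, g ω = (μ (s ∩ cylF F ω)).toReal / (μ (cylF F ω)).toReal := by
    intro ω
    have h1 : ∀ v, v ≠ (fun i : {x // x ∈ F} => ω i) →
        (atomC F v).indicator (fun _ => r v) ω = 0 := by
      intro v hv
      apply Set.indicator_of_notMem
      intro hmem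
      exact hv (funext fun i => (mem_atomC.1 hmem i).symm)
    show (∑ v : {x // x ∈ F} → E, (atomC F v).indicator (fun _ => r v) ω)
        = (μ (s ∩ cylF F ω)).toReal / (μ (cylF F ω)).toReal
    rw [Finset.sum_eq_single (fun i : {x // x ∈ F} => ω i)
      (fun v _ hv => h1 v hv) (by simp)]
    rw [Set.indicator_of_mem (atomC_cover F ω)]
    show (μ (s ∩ atomC F (fun i : {x // x ∈ F} => ω i))).toReal
        / (μ (atomC F (fun i : {x // x ∈ F} => ω i))).toReal = _
    rw [atomC_of_mem (atomC_cover F ω)]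
  -- m'-measurable atoms
  have hatom_m' : ∀ v : {x // x ∈ F} → E, MeasurableSet[cylSigma E (↑F : Set ℤ)] (atomC F v) :=
    fun v => cylF_mem_cylSigma (le_refl _) _
  have hatom_amb : ∀ v : {x // x ∈ F} → E, MeasurableSet (atomC F v) :=
    fun v => measurableSet_cylF _ _
  have hgsm : StronglyMeasurable[cylSigma E (↑F : Set ℤ)] g := by
    refine Measurable.stronglyMeasurable ?_
    refine Finset.measurable_sum Finset.univ fun v _ => ?_
    exact Measurable.indicator measurable_const (hatom_m' v)
  have hint : ∀ v : {x // x ∈ F} → E,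
      Integrable ((atomC F v).indicator (fun _ => r v)) μ :=
    fun v => (integrable_const (r v)).indicator (hatom_amb v)
  have hgint : Integrable g μ := by
    rw [hg]
    exact integrable_finset_sum _ fun v _ => hint v
  have hfint : Integrable (s.indicator (fun _ => (1 : ℝ))) μ :=
    (integrable_const 1).indicator hs
  have key : g =ᵐ[μ] μ[s.indicator (fun _ => (1 : ℝ)) | cylSigma E (↑F : Set ℤ)] := by
    refine ae_eq_condExp_of_forall_setIntegral_eq hm' hfint
      (fun t _ _ => hgint.integrableOn) (fun t ht hμt => ?_)
      (hgsm.aestronglyMeasurable)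
    -- t is a union of atoms
    obtain ⟨T, hT, rfl⟩ := ht
    set res : (ℤ → E) → ((↑(↑F : Set ℤ) : Type) → E) :=
      fun ω (i : (↑F : Set ℤ)) => ω (i : ℤ) with hres
    have hres_atom : ∀ (v : {x // x ∈ F} → E) (ω ω' : ℤ → E),
        ω ∈ atomC F v → ω' ∈ atomC F v → res ω = res ω' := by
      intro v ω ω' h1 h2
      funext i
      have hiF : (i : ℤ) ∈ F := by exact_mod_cast i.2
      have e1 := mem_atomC.1 h1 ⟨i, hiF⟩
      have e2 := mem_atomC.1 h2 ⟨i, hiF⟩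
      simp only [hres]
      rw [e1, ← e2]
    have htamb : MeasurableSet (res ⁻¹' T) := hm' _ ⟨T, hT, rfl⟩
    -- compute both integrals
    have hRHS : ∫ x in res ⁻¹' T, s.indicator (fun _ => (1 : ℝ)) x ∂μ
        = (μ (s ∩ res ⁻¹' T)).toReal := by
      rw [integral_indicator_const (1 : ℝ) hs, measureReal_def, Measure.restrict_apply hs, smul_eq_mul, mul_one]
    have hLHS : ∫ x in res ⁻¹' T, g x ∂μ
        = ∑ v : {x // x ∈ F} → E, (μ (atomC F v ∩ res ⁻¹' T)).toReal * r v := by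
      rw [hg]
      rw [integral_finset_sum _ fun v _ => (hint v).integrableOn]
      congr 1
      funext v
      rw [integral_indicator_const (r v) (hatom_amb v), measureReal_def, Measure.restrict_apply (hatom_amb v),
        smul_eq_mul]
    rw [hLHS, hRHS]
    have hdecomp : μ (s ∩ res ⁻¹' T)
        = ∑ v : {x // x ∈ F} → E, μ (s ∩ res ⁻¹' T ∩ atomC F v) :=
      pr_atom_sum μ (hs.inter htamb)
    rw [hdecomp, ENNReal.toReal_sum (fun v _ => measure_ne_top μ _)]
    congr 1
    funext v
    by_cases hcase : ∃ ω, ω ∈ atomC F v ∩ res ⁻¹' T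
    · obtain ⟨ω, hω1, hω2⟩ := hcase
      have hsub : atomC F v ⊆ res ⁻¹' T := by
        intro ω' hω'
        have : res ω' = res ω := hres_atom v ω' ω hω' hω1
        simpa [Set.mem_preimage, this] using hω2
      have e1 : atomC F v ∩ res ⁻¹' T = atomC F v := Set.inter_eq_left.2 hsub
      have e2 : s ∩ res ⁻¹' T ∩ atomC F v = s ∩ atomC F v := by
        ext ω'
        constructor
        · rintro ⟨⟨h1, -⟩, h3⟩; exact ⟨h1, h3⟩
        · rintro ⟨h1, h3⟩; exact ⟨⟨h1, hsub h3⟩, h3⟩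
      rw [e1, e2, hr]
      have hpos' : (μ (atomC F v)).toReal ≠ 0 :=
        (ENNReal.toReal_pos (ne_of_gt (hpos F (atomExt F v))) (measure_ne_top μ _)).ne'
      field_simp
    · have hempty : atomC F v ∩ res ⁻¹' T = ∅ := by
        rw [Set.eq_empty_iff_forall_notMem]
        intro ω hω
        exact hcase ⟨ω, hω⟩
      have hempty2 : s ∩ res ⁻¹' T ∩ atomC F v = ∅ := by
        rw [Set.eq_empty_iff_forall_notMem]
        intro ω hω
        exact hcase ⟨ω, hω.2, hω.1.2⟩
      rw [hempty, hempty2]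
      simp
  exact key.symm.trans (Filter.Eventually.of_forall fun ω => hgpt ω)

lemma cylF_empty (e : ℤ → E) : cylF (∅ : Finset ℤ) e = Set.univ := by
  ext ω; simp [cylF]

lemma cylF_pair (a b : ℤ) (e : ℤ → E) :
    cylF {a, b} e = pt a (e a) ∩ pt b (e b) := by
  ext ω; simp [cylF, pt]

lemma cylF_single (a : ℤ) (e : ℤ → E) : cylF {a} e = pt a (e a) := by
  ext ω; simp [cylF, pt]

/-- real-valued probability -/
noncomputable def pr (s : Set (ℤ → E)) : ℝ := (μ s).toReal

lemma pr_nonneg (s : Set (ℤ → E)) : 0 ≤ pr μ s := ENNReal.toReal_nonneg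

lemma pr_mono {s t : Set (ℤ → E)} (h : s ⊆ t) : pr μ s ≤ pr μ t :=
  ENNReal.toReal_mono (measure_ne_top μ t) (measure_mono h)

lemma pr_le_one (s : Set (ℤ → E)) : pr μ s ≤ 1 := by
  have := prob_le_one (μ := μ) (s := s)
  simpa [pr] using ENNReal.toReal_mono (by simp) this

/-- positivity of cylinders, from positivity on intervals -/
lemma pr_cylF_pos
    (hpos : ∀ a b : ℤ, a ≤ b → ∀ e : ℤ → E,
      0 < μ {ω | ∀ k ∈ Finset.Icc a b, ω k = e k})
    (F : Finset ℤ) (e : ℤ → E) : 0 < pr μ (cylF F e) := by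
  have hne : μ (cylF F e) ≠ ⊤ := measure_ne_top μ _
  rcases F.eq_empty_or_nonempty with rfl | hF
  · have : cylF (∅ : Finset ℤ) e = (Set.univ : Set (ℤ → E)) := by ext ω; simp [cylF]
    rw [pr, this]
    simp
  · have hab : F.min' hF ≤ F.max' hF := F.min'_le _ (F.max'_mem hF)
    have hsub : {ω : ℤ → E | ∀ k ∈ Finset.Icc (F.min' hF) (F.max' hF), ω k = e k}
        ⊆ cylF F e := by
      intro ω hω k hk
      exact hω k (Finset.mem_Icc.2 ⟨F.min'_le k hk, F.le_max' k hk⟩)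
    have := lt_of_lt_of_le (hpos _ _ hab e) (measure_mono hsub)
    exact ENNReal.toReal_pos (ne_of_gt this) hne

/-- fiber decomposition at coordinate j -/
lemma pr_fiber_sum {s : Set (ℤ → E)} (hs : MeasurableSet s) (j : ℤ) :
    pr μ s = ∑ x : E, pr μ (s ∩ pt j x) := by
  have hdisj : Pairwise (Function.onFun Disjoint fun x : E => s ∩ pt j x) := by
    intro x y hxy
    refine Set.disjoint_left.2 ?_
    rintro ω ⟨-, h1⟩ ⟨-, h2⟩
    exact hxy (h1.symm.trans h2)
  have hmeas : ∀ x : E, MeasurableSet (s ∩ pt j x) := by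
    intro x
    refine hs.inter ?_
    have : (pt j x : Set (ℤ → E)) = (fun ω : ℤ → E => ω j) ⁻¹' {x} := rfl
    rw [this]; exact (measurable_pi_apply j) (measurableSet_singleton x)
  have hunion : s = ⋃ x : E, (s ∩ pt j x) := by
    ext ω; simp [pt]
  have : μ s = ∑ x : E, μ (s ∩ pt j x) := by
    conv_lhs => rw [hunion]
    rw [measure_iUnion (fun x y h => hdisj h) hmeas, tsum_fintype]
  rw [pr, this, ENNReal.toReal_sum (fun x _ => measure_ne_top μ _)]
  rfl

/-- shift by m -/
def shiftT (m : ℤ) : (ℤ → E) → (ℤ → E) := fun ω k => ω (k + m)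

lemma measurable_shiftT (m : ℤ) : Measurable (shiftT (E := E) m) :=
  measurable_pi_lambda _ fun k => measurable_pi_apply (k + m)

lemma shiftT_map (hstat : Measure.map (fun ω (n : ℤ) => ω (n + 1)) μ = μ) (m : ℤ) :
    Measure.map (shiftT m) μ = μ := by
  have h1 : Measure.map (shiftT 1) μ = μ := hstat
  have hcomp : ∀ m m' : ℤ, (shiftT (E := E) m) ∘ (shiftT m') = shiftT (m' + m) := by
    intro m m'; funext ω k; simp [shiftT, Function.comp]; ring_nf
  have hid : shiftT (E := E) 0 = id := by funext ω k; simp [shiftT]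
  have hneg : Measure.map (shiftT (-1)) μ = μ := by
    have h2 : Measure.map (shiftT (-1)) (Measure.map (shiftT 1) μ) = μ := by
      rw [Measure.map_map (measurable_shiftT _) (measurable_shiftT _), hcomp]
      norm_num [hid]
    rwa [h1] at h2
  induction m using Int.induction_on with
  | zero => rw [hid, Measure.map_id]
  | succ i ih =>
      have : Measure.map (shiftT 1) (Measure.map (shiftT i) μ) = μ := by
        rw [ih, h1]
      rwa [Measure.map_map (measurable_shiftT _) (measurable_shiftT _), hcomp] at this
  | pred i ih =>
      have : Measure.map (shiftT (-1)) (Measure.map (shiftT (-i)) μ) = μ := by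
        rw [ih, hneg]
      rw [Measure.map_map (measurable_shiftT _) (measurable_shiftT _), hcomp] at this
      rw [show -(i : ℤ) - 1 = -i + -1 by ring]
      exact this

lemma pr_shift (hstat : Measure.map (fun ω (n : ℤ) => ω (n + 1)) μ = μ) (m : ℤ)
    {s : Set (ℤ → E)} (hs : MeasurableSet s) :
    pr μ (shiftT m ⁻¹' s) = pr μ s := by
  have h := Measure.map_apply (μ := μ) (measurable_shiftT m) hs
  rw [shiftT_map μ hstat m] at h
  rw [pr, pr, h]

lemma shiftT_preimage_pt (m j : ℤ) (x : E) :
    shiftT m ⁻¹' (pt j x) = (pt (j + m) x : Set (ℤ → E)) := by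
  ext ω; simp [shiftT, pt]


end MFC

namespace MFC
set_option linter.unusedSectionVars false
variable {E : Type*} [Fintype E] [Nonempty E]
  [TopologicalSpace E] [DiscreteTopology E] [MeasurableSpace E] [BorelSpace E]
  (μ : Measure (ℤ → E)) [IsProbabilityMeasure μ]

lemma cylF_congr {F : Finset ℤ} {e ω : ℤ → E} (hω : ω ∈ cylF F e) :
    cylF F ω = cylF F e := by
  ext ω'
  constructor
  · intro h k hk; rw [h k hk, hω k hk]
  · intro h k hk; rw [h k hk, ← hω k hk]

/-- conditional-independence condexp identity over `cylSigma ↑F` is equivalent to an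
elementary identity on each cylinder atom. -/
lemma condexp_product_iff
    (hpos : ∀ (G : Finset ℤ) (e : ℤ → E), 0 < μ (cylF G e))
    (F : Finset ℤ) {s t : Set (ℤ → E)} (hs : MeasurableSet s) (ht : MeasurableSet t) :
    ((μ⟦s ∩ t | cylSigma E ↑F⟧) =ᵐ[μ] (μ⟦s | cylSigma E ↑F⟧) * (μ⟦t | cylSigma E ↑F⟧))
      ↔ ∀ e : ℤ → E,
        (μ (cylF F e)).toReal * (μ (s ∩ t ∩ cylF F e)).toReal
          = (μ (s ∩ cylF F e)).toReal * (μ (t ∩ cylF F e)).toReal := by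
  have h1 := condexp_cylF μ hpos F (hs.inter ht)
  have h2 := condexp_cylF μ hpos F hs
  have h3 := condexp_cylF μ hpos F ht
  constructor
  · intro h e
    have hae : ∀ᵐ ω ∂μ,
        (μ⟦s ∩ t | cylSigma E ↑F⟧) ω
            = (μ (s ∩ t ∩ cylF F ω)).toReal / (μ (cylF F ω)).toReal ∧
        (μ⟦s | cylSigma E ↑F⟧) ω
            = (μ (s ∩ cylF F ω)).toReal / (μ (cylF F ω)).toReal ∧
        (μ⟦t | cylSigma E ↑F⟧) ω
            = (μ (t ∩ cylF F ω)).toReal / (μ (cylF F ω)).toReal ∧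
        (μ⟦s ∩ t | cylSigma E ↑F⟧) ω
            = ((μ⟦s | cylSigma E ↑F⟧) * (μ⟦t | cylSigma E ↑F⟧)) ω := by
      filter_upwards [h1, h2, h3, h] with ω e1 e2 e3 e4 using ⟨e1, e2, e3, e4⟩
    rw [Filter.eventually_iff, mem_ae_iff] at hae
    have hpose : μ (cylF F e ∩ {ω | _}) = μ (cylF F e) := measure_inter_conull hae
    have hne : (cylF F e ∩ _).Nonempty :=
      nonempty_of_measure_ne_zero (by rw [hpose]; exact (hpos F e).ne')
    obtain ⟨ω, hωe, hω1, hω2, hω3, hω4⟩ := hne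
    rw [cylF_congr hωe] at hω1 hω2 hω3
    rw [Pi.mul_apply] at hω4
    rw [hω1, hω2, hω3] at hω4
    have hc : (0 : ℝ) < (μ (cylF F e)).toReal :=
      ENNReal.toReal_pos (hpos F e).ne' (measure_ne_top μ _)
    rw [div_mul_div_comm] at hω4
    have h5 := (div_eq_div_iff hc.ne' (by positivity)).mp hω4
    refine mul_right_cancel₀ hc.ne' ?_
    calc (μ (cylF F e)).toReal * (μ (s ∩ t ∩ cylF F e)).toReal * (μ (cylF F e)).toReal
        = (μ (s ∩ t ∩ cylF F e)).toReal * ((μ (cylF F e)).toReal * (μ (cylF F e)).toReal) := by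
          ring
      _ = (μ (s ∩ cylF F e)).toReal * (μ (t ∩ cylF F e)).toReal * (μ (cylF F e)).toReal := h5
  · intro h
    filter_upwards [h1, h2, h3] with ω e1 e2 e3
    rw [Pi.mul_apply, e1, e2, e3]
    have hc : (0 : ℝ) < (μ (cylF F ω)).toReal :=
      ENNReal.toReal_pos (hpos F ω).ne' (measure_ne_top μ _)
    rw [div_mul_div_comm, div_eq_div_iff hc.ne' (by positivity)]
    calc (μ (s ∩ t ∩ cylF F ω)).toReal * ((μ (cylF F ω)).toReal * (μ (cylF F ω)).toReal)
        = (μ (cylF F ω)).toReal * (μ (s ∩ t ∩ cylF F ω)).toReal * (μ (cylF F ω)).toReal := by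
          ring
      _ = (μ (s ∩ cylF F ω)).toReal * (μ (t ∩ cylF F ω)).toReal * (μ (cylF F ω)).toReal := by
          rw [h ω]

end MFC

namespace MFC
set_option linter.unusedSectionVars false
variable {E : Type*} [Fintype E] [Nonempty E]
  [TopologicalSpace E] [DiscreteTopology E] [MeasurableSpace E] [BorelSpace E]
  (μ : Measure (ℤ → E)) [IsProbabilityMeasure μ]

lemma field_numeric
    (hpos : ∀ (G : Finset ℤ) (e : ℤ → E), 0 < μ (cylF G e))
    (hfield : ∀ a b : ℤ, a < b →
      CondIndep (cylSigma E {a, b}) (cylSigma E (Set.Ioo a b)) (cylSigma E (Set.Icc a b)ᶜ)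
        (cylSigma_le E {a, b}) μ)
    {a b : ℤ} (hab : a < b) {s t : Set (ℤ → E)}
    (hs : MeasurableSet[cylSigma E (Set.Ioo a b)] s)
    (ht : MeasurableSet[cylSigma E ((Set.Icc a b)ᶜ)] t) (u v : E) :
    (μ (pt a u ∩ pt b v)).toReal * (μ (s ∩ t ∩ (pt a u ∩ pt b v))).toReal
      = (μ (s ∩ (pt a u ∩ pt b v))).toReal * (μ (t ∩ (pt a u ∩ pt b v))).toReal := by
  have hsm : MeasurableSet s := cylSigma_le E _ _ hs
  have htm : MeasurableSet t := cylSigma_le E _ _ ht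
  have h := (condIndep_iff _ _ _ (cylSigma_le E {a, b}) (cylSigma_le E _) (cylSigma_le E _)
      μ).mp (hfield a b hab) s t hs ht
  have hset : ({a, b} : Set ℤ) = (↑({a, b} : Finset ℤ) : Set ℤ) := by simp
  rw [hset] at h
  have h1 := (condexp_product_iff μ hpos ({a, b} : Finset ℤ) hsm htm).mp h
    (fun k => if k = a then u else v)
  have hne : b ≠ a := hab.ne'
  rw [cylF_pair] at h1
  simp only [if_pos rfl, if_neg hne] at h1
  exact h1

end MFC

namespace MFC
set_option linter.unusedSectionVars false
variable {E : Type*} [Fintype E] [Nonempty E]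
  [TopologicalSpace E] [DiscreteTopology E] [MeasurableSpace E] [BorelSpace E]
  (μ : Measure (ℤ → E)) [IsProbabilityMeasure μ]

lemma cylF_triple {a b c : ℤ} (hba : b ≠ a) (hca : c ≠ a) (hcb : c ≠ b) (u v w : E) :
    cylF ({a, b, c} : Finset ℤ) (fun k => if k = a then u else if k = b then v else w)
      = pt a u ∩ pt b v ∩ pt c w := by
  ext ω
  simp only [cylF, pt, Set.mem_setOf_eq, Finset.mem_insert, Finset.mem_singleton,
    Set.mem_inter_iff]
  constructor
  · intro h
    refine ⟨⟨?_, ?_⟩, ?_⟩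
    · simpa using h a (Or.inl rfl)
    · simpa [hba] using h b (Or.inr (Or.inl rfl))
    · simpa [hca, hcb] using h c (Or.inr (Or.inr rfl))
  · rintro ⟨⟨h1, h2⟩, h3⟩ k hk
    rcases hk with rfl | rfl | rfl
    · simpa using h1
    · simpa [hba] using h2
    · simpa [hca, hcb] using h3

lemma pt_inter_eq_cylF_pair {a b : ℤ} (hba : b ≠ a) (u v : E) :
    pt a u ∩ pt b v = cylF ({a, b} : Finset ℤ) (fun k => if k = a then u else v) := by
  rw [cylF_pair]
  simp [hba]

lemma pos1 (hpos : ∀ (G : Finset ℤ) (e : ℤ → E), 0 < μ (cylF G e)) (a : ℤ) (u : E) :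
    0 < (μ (pt a u)).toReal := by
  have h := hpos {a} (fun _ => u)
  rw [cylF_single] at h
  exact ENNReal.toReal_pos h.ne' (measure_ne_top μ _)

lemma pos2 (hpos : ∀ (G : Finset ℤ) (e : ℤ → E), 0 < μ (cylF G e)) {a b : ℤ} (hba : b ≠ a)
    (u v : E) : 0 < (μ (pt a u ∩ pt b v)).toReal := by
  rw [pt_inter_eq_cylF_pair hba]
  exact ENNReal.toReal_pos (hpos _ _).ne' (measure_ne_top μ _)

lemma pos3 (hpos : ∀ (G : Finset ℤ) (e : ℤ → E), 0 < μ (cylF G e)) {a b c : ℤ}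
    (hba : b ≠ a) (hca : c ≠ a) (hcb : c ≠ b) (u v w : E) :
    0 < (μ (pt a u ∩ pt b v ∩ pt c w)).toReal := by
  rw [← cylF_triple hba hca hcb]
  exact ENNReal.toReal_pos (hpos _ _).ne' (measure_ne_top μ _)

/-- fiber decomposition, toReal version -/
lemma toReal_fiber_sum {s : Set (ℤ → E)} (hs : MeasurableSet s) (j : ℤ) :
    (μ s).toReal = ∑ x : E, (μ (s ∩ pt j x)).toReal :=
  pr_fiber_sum μ hs j

/-- the one-step conditional ratio -/
noncomputable def cc (n : ℤ) (y z : E) (a : ℤ) (u : E) : ℝ :=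
  (μ (pt a u ∩ pt n y ∩ pt (n + 1) z)).toReal / (μ (pt a u ∩ pt n y)).toReal

lemma cc_nonneg (n : ℤ) (y z : E) (a : ℤ) (u : E) : 0 ≤ cc μ n y z a u :=
  div_nonneg ENNReal.toReal_nonneg ENNReal.toReal_nonneg

lemma cc_le_one (n : ℤ) (y z : E) (a : ℤ) (u : E) : cc μ n y z a u ≤ 1 := by
  rw [cc]
  rcases eq_or_ne ((μ (pt a u ∩ pt n y)).toReal) 0 with h | h
  · rw [h, div_zero]; norm_num
  · rw [div_le_one (lt_of_le_of_ne ENNReal.toReal_nonneg (Ne.symm h))]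
    exact ENNReal.toReal_mono (measure_ne_top μ _)
      (measure_mono (Set.inter_subset_left.trans (le_refl _)))

end MFC

namespace MFC
set_option linter.unusedSectionVars false
variable {E : Type*} [Fintype E] [Nonempty E]
  [TopologicalSpace E] [DiscreteTopology E] [MeasurableSpace E] [BorelSpace E]
  (μ : Measure (ℤ → E)) [IsProbabilityMeasure μ]

lemma meas_pp (a b : ℤ) (u v : E) : MeasurableSet (pt a u ∩ pt b v : Set (ℤ → E)) :=
  (measurableSet_pt a u).inter (measurableSet_pt b v)

lemma meas_ppp (a b c : ℤ) (u v w : E) :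
    MeasurableSet (pt a u ∩ pt b v ∩ pt c w : Set (ℤ → E)) :=
  (meas_pp a b u v).inter (measurableSet_pt c w)

lemma cc_rec
    (hpos : ∀ (G : Finset ℤ) (e : ℤ → E), 0 < μ (cylF G e))
    (hfield : ∀ a b : ℤ, a < b →
      CondIndep (cylSigma E {a, b}) (cylSigma E (Set.Ioo a b)) (cylSigma E (Set.Icc a b)ᶜ)
        (cylSigma_le E {a, b}) μ)
    {n a : ℤ} (han : a < n) (y z u : E) :
    cc μ n y z a u = ∑ u' : E,
      ((μ (pt (a - 1) u' ∩ pt a u ∩ pt n y)).toReal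
          / (μ (pt a u ∩ pt n y)).toReal) * cc μ n y z (a - 1) u' := by
  have hnum : (μ (pt a u ∩ pt n y ∩ pt (n + 1) z)).toReal
      = ∑ u' : E, (μ (pt (a - 1) u' ∩ pt a u ∩ pt n y)).toReal * cc μ n y z (a - 1) u' := by
    rw [toReal_fiber_sum μ (meas_ppp a n (n+1) u y z) (a - 1)]
    refine Finset.sum_congr rfl fun u' _ => ?_
    have hs : MeasurableSet[cylSigma E (Set.Ioo (a - 1) n)] (pt a u) :=
      pt_mem_cylSigma (Set.mem_Ioo.2 ⟨by omega, han⟩) u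
    have ht : MeasurableSet[cylSigma E ((Set.Icc (a - 1) n)ᶜ)] (pt (n + 1) z) :=
      pt_mem_cylSigma (by simp [Set.mem_Icc]) z
    have key := field_numeric μ hpos hfield (show a - 1 < n by omega) hs ht u' y
    have e1 : (pt a u ∩ pt n y ∩ pt (n + 1) z) ∩ pt (a - 1) u'
        = pt a u ∩ pt (n + 1) z ∩ (pt (a - 1) u' ∩ pt n y) := by
      ext ω; simp only [Set.mem_inter_iff, pt, Set.mem_setOf_eq]; tauto
    have e2 : pt a u ∩ (pt (a - 1) u' ∩ pt n y)
        = pt (a - 1) u' ∩ pt a u ∩ pt n y := by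
      ext ω; simp only [Set.mem_inter_iff, pt, Set.mem_setOf_eq]; tauto
    have e3 : pt (n + 1) z ∩ (pt (a - 1) u' ∩ pt n y)
        = pt (a - 1) u' ∩ pt n y ∩ pt (n + 1) z := by
      ext ω; simp only [Set.mem_inter_iff, pt, Set.mem_setOf_eq]; tauto
    rw [e2, e3] at key
    have hB : 0 < (μ (pt (a - 1) u' ∩ pt n y)).toReal :=
      pos2 μ hpos (show n ≠ a - 1 by omega) u' y
    rw [e1]
    have hcc : cc μ n y z (a - 1) u'
        = (μ (pt (a - 1) u' ∩ pt n y ∩ pt (n + 1) z)).toReal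
            / (μ (pt (a - 1) u' ∩ pt n y)).toReal := rfl
    rw [hcc, ← mul_div_assoc, eq_div_iff hB.ne']
    linarith [key]
  rw [cc, hnum, Finset.sum_div]
  exact Finset.sum_congr rfl fun u' _ => by ring
end MFC

namespace MFC
set_option linter.unusedSectionVars false
variable {E : Type*} [Fintype E] [Nonempty E]
  [TopologicalSpace E] [DiscreteTopology E] [MeasurableSpace E] [BorelSpace E]
  (μ : Measure (ℤ → E)) [IsProbabilityMeasure μ]

noncomputable def rho (s u' u : E) : ℝ :=
  (μ (pt (-1) s ∩ pt 0 u' ∩ pt 1 u)).toReal / (μ (pt (-1) s ∩ pt 1 u)).toReal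

noncomputable def del : ℝ :=
  (Finset.univ : Finset (E × E × E)).inf' Finset.univ_nonempty
    fun p => rho μ p.1 p.2.1 p.2.2

lemma rho_pos (hpos : ∀ (G : Finset ℤ) (e : ℤ → E), 0 < μ (cylF G e)) (s u' u : E) :
    0 < rho μ s u' u :=
  div_pos (pos3 μ hpos (by norm_num) (by norm_num) (by norm_num) s u' u)
    (pos2 μ hpos (by norm_num) s u)

lemma rho_le_one (hpos : ∀ (G : Finset ℤ) (e : ℤ → E), 0 < μ (cylF G e)) (s u' u : E) :
    rho μ s u' u ≤ 1 := by
  rw [rho, div_le_one (pos2 μ hpos (by norm_num) s u)]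
  refine ENNReal.toReal_mono (measure_ne_top μ _) (measure_mono ?_)
  rintro ω ⟨⟨h1, -⟩, h3⟩; exact ⟨h1, h3⟩

lemma del_pos (hpos : ∀ (G : Finset ℤ) (e : ℤ → E), 0 < μ (cylF G e)) : 0 < del μ := by
  rw [del, Finset.lt_inf'_iff]
  exact fun p _ => rho_pos μ hpos _ _ _

lemma del_le_rho (s u' u : E) : del μ ≤ rho μ s u' u :=
  Finset.inf'_le _ (Finset.mem_univ (s, u', u))

lemma del_le_one (hpos : ∀ (G : Finset ℤ) (e : ℤ → E), 0 < μ (cylF G e)) : del μ ≤ 1 := by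
  obtain ⟨x⟩ := (inferInstance : Nonempty E)
  exact (del_le_rho μ x x x).trans (rho_le_one μ hpos x x x)

lemma shift3' (hstat : Measure.map (fun ω (n : ℤ) => ω (n + 1)) μ = μ)
    {j1 j2 j3 m : ℤ} (h1 : j1 = -1 + m) (h2 : j2 = 0 + m) (h3 : j3 = 1 + m) (s u' u : E) :
    (μ (pt j1 s ∩ pt j2 u' ∩ pt j3 u)).toReal
      = (μ (pt (-1) s ∩ pt 0 u' ∩ pt 1 u)).toReal := by
  subst h1 h2 h3
  have h := pr_shift μ hstat m (meas_ppp (-1) 0 1 s u' u)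
  rw [Set.preimage_inter, Set.preimage_inter, shiftT_preimage_pt, shiftT_preimage_pt,
    shiftT_preimage_pt] at h
  exact h

lemma shift2' (hstat : Measure.map (fun ω (n : ℤ) => ω (n + 1)) μ = μ)
    {j1 j3 m : ℤ} (h1 : j1 = -1 + m) (h3 : j3 = 1 + m) (s u : E) :
    (μ (pt j1 s ∩ pt j3 u)).toReal = (μ (pt (-1) s ∩ pt 1 u)).toReal := by
  subst h1 h3
  have h := pr_shift μ hstat m (meas_pp (-1) 1 s u)
  rw [Set.preimage_inter, shiftT_preimage_pt, shiftT_preimage_pt] at h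
  exact h

lemma wgt_sum {a b c : ℤ} (hd : a ≠ b) (hd2 : a ≠ c) (u v : E) :
    ∑ u' : E, (μ (pt a u' ∩ pt b u ∩ pt c v)).toReal
      = (μ (pt b u ∩ pt c v)).toReal := by
  rw [toReal_fiber_sum μ (meas_pp b c u v) a]
  refine Finset.sum_congr rfl fun u' _ => ?_
  congr 2
  ext ω; simp only [Set.mem_inter_iff, pt, Set.mem_setOf_eq]; tauto

lemma wgt_ge_del
    (hpos : ∀ (G : Finset ℤ) (e : ℤ → E), 0 < μ (cylF G e))
    (hfield : ∀ a b : ℤ, a < b →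
      CondIndep (cylSigma E {a, b}) (cylSigma E (Set.Ioo a b)) (cylSigma E (Set.Icc a b)ᶜ)
        (cylSigma_le E {a, b}) μ)
    (hstat : Measure.map (fun ω (n : ℤ) => ω (n + 1)) μ = μ)
    {n a : ℤ} (han : a < n) (y u u' : E) :
    del μ * (μ (pt a u ∩ pt n y)).toReal
      ≤ (μ (pt (a - 1) u' ∩ pt a u ∩ pt n y)).toReal := by
  have hNsum : (μ (pt (a - 1) u' ∩ pt a u ∩ pt n y)).toReal
      = ∑ s : E, (μ (pt (a - 2) s ∩ pt (a - 1) u' ∩ pt a u ∩ pt n y)).toReal := by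
    rw [toReal_fiber_sum μ (meas_ppp (a-1) a n u' u y) (a - 2)]
    refine Finset.sum_congr rfl fun s _ => ?_
    congr 2
    ext ω; simp only [Set.mem_inter_iff, pt, Set.mem_setOf_eq]; tauto
  have hDsum : (μ (pt a u ∩ pt n y)).toReal
      = ∑ s : E, (μ (pt (a - 2) s ∩ pt a u ∩ pt n y)).toReal := by
    rw [toReal_fiber_sum μ (meas_pp a n u y) (a - 2)]
    refine Finset.sum_congr rfl fun s _ => ?_
    congr 2
    ext ω; simp only [Set.mem_inter_iff, pt, Set.mem_setOf_eq]; tauto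
  rw [hNsum, hDsum, Finset.mul_sum]
  refine Finset.sum_le_sum fun s _ => ?_
  -- term bound via the field property at (a-2, a) and stationarity
  have hs : MeasurableSet[cylSigma E (Set.Ioo (a - 2) a)] (pt (a - 1) u') :=
    pt_mem_cylSigma (Set.mem_Ioo.2 ⟨by omega, by omega⟩) u'
  have ht : MeasurableSet[cylSigma E ((Set.Icc (a - 2) a)ᶜ)] (pt n y) :=
    pt_mem_cylSigma (by simp [Set.mem_Icc]; omega) y
  have key := field_numeric μ hpos hfield (show a - 2 < a by omega) hs ht s u
  have e1 : pt (a - 1) u' ∩ pt n y ∩ (pt (a - 2) s ∩ pt a u)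
      = pt (a - 2) s ∩ pt (a - 1) u' ∩ pt a u ∩ pt n y := by
    ext ω; simp only [Set.mem_inter_iff, pt, Set.mem_setOf_eq]; tauto
  have e2 : pt (a - 1) u' ∩ (pt (a - 2) s ∩ pt a u)
      = pt (a - 2) s ∩ pt (a - 1) u' ∩ pt a u := by
    ext ω; simp only [Set.mem_inter_iff, pt, Set.mem_setOf_eq]; tauto
  have e3 : pt n y ∩ (pt (a - 2) s ∩ pt a u)
      = pt (a - 2) s ∩ pt a u ∩ pt n y := by
    ext ω; simp only [Set.mem_inter_iff, pt, Set.mem_setOf_eq]; tauto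
  rw [e1, e2, e3] at key
  have hB2 : 0 < (μ (pt (a - 2) s ∩ pt a u)).toReal :=
    pos2 μ hpos (by omega) s u
  have hsh3 : (μ (pt (a - 2) s ∩ pt (a - 1) u' ∩ pt a u)).toReal
      = (μ (pt (-1) s ∩ pt 0 u' ∩ pt 1 u)).toReal :=
    shift3' μ hstat (m := a - 1) (by ring) (by ring) (by ring) s u' u
  have hsh2 : (μ (pt (a - 2) s ∩ pt a u)).toReal
      = (μ (pt (-1) s ∩ pt 1 u)).toReal :=
    shift2' μ hstat (m := a - 1) (by ring) (by ring) s u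
  -- key : B2 * X = Y * Z, so X = rho * Z ≥ del * Z
  have hX : (μ (pt (a - 2) s ∩ pt (a - 1) u' ∩ pt a u ∩ pt n y)).toReal
      = rho μ s u' u * (μ (pt (a - 2) s ∩ pt a u ∩ pt n y)).toReal := by
    rw [rho, ← hsh3, ← hsh2, div_mul_eq_mul_div, eq_div_iff hB2.ne']
    linarith [key]
  rw [hX]
  have hZ : 0 ≤ (μ (pt (a - 2) s ∩ pt a u ∩ pt n y)).toReal := ENNReal.toReal_nonneg
  exact mul_le_mul_of_nonneg_right (del_le_rho μ s u' u) hZ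
end MFC

namespace MFC
set_option linter.unusedSectionVars false
variable {E : Type*} [Fintype E] [Nonempty E]
  [TopologicalSpace E] [DiscreteTopology E] [MeasurableSpace E] [BorelSpace E]
  (μ : Measure (ℤ → E)) [IsProbabilityMeasure μ]

noncomputable def Mx (n : ℤ) (y z : E) (a : ℤ) : ℝ :=
  Finset.univ.sup' Finset.univ_nonempty (cc μ n y z a)

noncomputable def mN (n : ℤ) (y z : E) (a : ℤ) : ℝ :=
  Finset.univ.inf' Finset.univ_nonempty (cc μ n y z a)

lemma mN_le_cc (n : ℤ) (y z : E) (a : ℤ) (u : E) : mN μ n y z a ≤ cc μ n y z a u :=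
  Finset.inf'_le _ (Finset.mem_univ u)

lemma cc_le_Mx (n : ℤ) (y z : E) (a : ℤ) (u : E) : cc μ n y z a u ≤ Mx μ n y z a :=
  Finset.le_sup' _ (Finset.mem_univ u)

lemma mN_le_Mx (n : ℤ) (y z : E) (a : ℤ) : mN μ n y z a ≤ Mx μ n y z a := by
  obtain ⟨u⟩ := (inferInstance : Nonempty E)
  exact (mN_le_cc μ n y z a u).trans (cc_le_Mx μ n y z a u)

lemma Mx_le_one (n : ℤ) (y z : E) (a : ℤ) : Mx μ n y z a ≤ 1 :=
  Finset.sup'_le _ _ fun u _ => cc_le_one μ n y z a u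

lemma mN_nonneg (n : ℤ) (y z : E) (a : ℤ) : 0 ≤ mN μ n y z a :=
  Finset.le_inf' _ _ fun u _ => cc_nonneg μ n y z a u

lemma osc_rec (hpos : ∀ (G : Finset ℤ) (e : ℤ → E), 0 < μ (cylF G e))
    (hfield : ∀ a b : ℤ, a < b →
      CondIndep (cylSigma E {a, b}) (cylSigma E (Set.Ioo a b)) (cylSigma E (Set.Icc a b)ᶜ)
        (cylSigma_le E {a, b}) μ)
    (hstat : Measure.map (fun ω (n : ℤ) => ω (n + 1)) μ = μ)
    {n a : ℤ} (han : a < n) (y z : E) :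
    Mx μ n y z a - mN μ n y z a
      ≤ (1 - del μ) * (Mx μ n y z (a - 1) - mN μ n y z (a - 1)) := by
  classical
  set D : ℝ := (μ (pt a (Classical.arbitrary E) ∩ pt n y)).toReal with hD
  -- weights depend on u; work pointwise
  obtain ⟨ustar, -, hustar⟩ :=
    Finset.exists_mem_eq_inf' (Finset.univ_nonempty (α := E)) (cc μ n y z (a - 1))
  have hosc' : 0 ≤ Mx μ n y z (a - 1) - mN μ n y z (a - 1) :=
    sub_nonneg.2 (mN_le_Mx μ n y z (a - 1))
  have hub : ∀ u : E, cc μ n y z a u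
      ≤ mN μ n y z (a - 1) + (1 - del μ) * (Mx μ n y z (a - 1) - mN μ n y z (a - 1)) := by
    intro u
    have hDu : 0 < (μ (pt a u ∩ pt n y)).toReal := pos2 μ hpos (by omega) u y
    set w : E → ℝ := fun u' =>
      (μ (pt (a - 1) u' ∩ pt a u ∩ pt n y)).toReal / (μ (pt a u ∩ pt n y)).toReal with hw
    have hw_nonneg : ∀ u', 0 ≤ w u' :=
      fun u' => div_nonneg ENNReal.toReal_nonneg ENNReal.toReal_nonneg
    have hw_sum : ∑ u' : E, w u' = 1 := by
      rw [hw]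
      rw [← Finset.sum_div, wgt_sum μ (by omega) (by omega), div_self hDu.ne']
    have hw_star : del μ ≤ w ustar := by
      rw [hw, le_div_iff₀ hDu]
      exact wgt_ge_del μ hpos hfield hstat han y u ustar
    have hrec := cc_rec μ hpos hfield han y z u
    rw [hrec]
    have hsplit : ∑ u' : E, w u' * cc μ n y z (a - 1) u'
        = w ustar * cc μ n y z (a - 1) ustar
          + ∑ u' ∈ Finset.univ.erase ustar, w u' * cc μ n y z (a - 1) u' :=
      (Finset.add_sum_erase _ (fun u' => w u' * cc μ n y z (a - 1) u')
        (Finset.mem_univ ustar)).symm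
    rw [hsplit]
    have h1 : cc μ n y z (a - 1) ustar = mN μ n y z (a - 1) := hustar.symm
    have h2 : ∑ u' ∈ Finset.univ.erase ustar, w u' * cc μ n y z (a - 1) u'
        ≤ (1 - w ustar) * Mx μ n y z (a - 1) := by
      have hsum_erase : ∑ u' ∈ Finset.univ.erase ustar, w u' = 1 - w ustar := by
        have := Finset.add_sum_erase Finset.univ w (Finset.mem_univ ustar)
        linarith [hw_sum, this]
      calc ∑ u' ∈ Finset.univ.erase ustar, w u' * cc μ n y z (a - 1) u'
          ≤ ∑ u' ∈ Finset.univ.erase ustar, w u' * Mx μ n y z (a - 1) := by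
            refine Finset.sum_le_sum fun u' _ => ?_
            exact mul_le_mul_of_nonneg_left (cc_le_Mx μ n y z (a - 1) u') (hw_nonneg u')
        _ = (1 - w ustar) * Mx μ n y z (a - 1) := by
            rw [← Finset.sum_mul, hsum_erase]
    have hwle1 : w ustar ≤ 1 := by
      have : ∀ u' ∈ Finset.univ.erase ustar, (0:ℝ) ≤ w u' := fun u' _ => hw_nonneg u'
      have hge : 0 ≤ ∑ u' ∈ Finset.univ.erase ustar, w u' := Finset.sum_nonneg this
      have := Finset.add_sum_erase Finset.univ w (Finset.mem_univ ustar)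
      linarith [hw_sum]
    have hmono : (1 - w ustar) * Mx μ n y z (a - 1)
        ≤ (1 - w ustar) * Mx μ n y z (a - 1) := le_refl _
    have hMx' := mN_le_Mx μ n y z (a - 1)
    calc w ustar * cc μ n y z (a - 1) ustar
          + ∑ u' ∈ Finset.univ.erase ustar, w u' * cc μ n y z (a - 1) u'
        ≤ w ustar * mN μ n y z (a - 1) + (1 - w ustar) * Mx μ n y z (a - 1) := by
          rw [h1]; linarith [h2]
      _ = mN μ n y z (a - 1) + (1 - w ustar) * (Mx μ n y z (a - 1) - mN μ n y z (a - 1)) := by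
          ring
      _ ≤ mN μ n y z (a - 1) + (1 - del μ) * (Mx μ n y z (a - 1) - mN μ n y z (a - 1)) := by
          have : (1 - w ustar) ≤ (1 - del μ) := by linarith [hw_star]
          nlinarith [hosc']
  have hlb : ∀ u : E, mN μ n y z (a - 1) ≤ cc μ n y z a u := by
    intro u
    have hDu : 0 < (μ (pt a u ∩ pt n y)).toReal := pos2 μ hpos (by omega) u y
    set w : E → ℝ := fun u' =>
      (μ (pt (a - 1) u' ∩ pt a u ∩ pt n y)).toReal / (μ (pt a u ∩ pt n y)).toReal with hw
    have hw_nonneg : ∀ u', 0 ≤ w u' :=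
      fun u' => div_nonneg ENNReal.toReal_nonneg ENNReal.toReal_nonneg
    have hw_sum : ∑ u' : E, w u' = 1 := by
      rw [hw, ← Finset.sum_div, wgt_sum μ (by omega) (by omega), div_self hDu.ne']
    rw [cc_rec μ hpos hfield han y z u]
    calc mN μ n y z (a - 1) = ∑ u' : E, w u' * mN μ n y z (a - 1) := by
          rw [← Finset.sum_mul, hw_sum, one_mul]
      _ ≤ ∑ u' : E, w u' * cc μ n y z (a - 1) u' :=
          Finset.sum_le_sum fun u' _ =>
            mul_le_mul_of_nonneg_left (mN_le_cc μ n y z (a - 1) u') (hw_nonneg u')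
  have hMxa : Mx μ n y z a
      ≤ mN μ n y z (a - 1) + (1 - del μ) * (Mx μ n y z (a - 1) - mN μ n y z (a - 1)) :=
    Finset.sup'_le _ _ fun u _ => hub u
  have hmNa : mN μ n y z (a - 1) ≤ mN μ n y z a :=
    Finset.le_inf' _ _ fun u _ => hlb u
  linarith

lemma osc_zero (hpos : ∀ (G : Finset ℤ) (e : ℤ → E), 0 < μ (cylF G e))
    (hfield : ∀ a b : ℤ, a < b →
      CondIndep (cylSigma E {a, b}) (cylSigma E (Set.Ioo a b)) (cylSigma E (Set.Icc a b)ᶜ)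
        (cylSigma_le E {a, b}) μ)
    (hstat : Measure.map (fun ω (n : ℤ) => ω (n + 1)) μ = μ)
    {n a : ℤ} (han : a < n) (y z : E) :
    Mx μ n y z a = mN μ n y z a := by
  have hbound : ∀ k : ℕ, ∀ b : ℤ, b < n → Mx μ n y z b - mN μ n y z b ≤ (1 - del μ) ^ k := by
    intro k
    induction k with
    | zero =>
      intro b hb
      simp only [pow_zero]
      linarith [Mx_le_one μ n y z b, mN_nonneg μ n y z b]
    | succ k ih =>
      intro b hb
      have h1 := osc_rec μ hpos hfield hstat hb y z
      have h2 := ih (b - 1) (by omega)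
      have hdel1 : 0 ≤ 1 - del μ := by linarith [del_le_one μ hpos]
      calc Mx μ n y z b - mN μ n y z b
          ≤ (1 - del μ) * (Mx μ n y z (b - 1) - mN μ n y z (b - 1)) := h1
        _ ≤ (1 - del μ) * (1 - del μ) ^ k := mul_le_mul_of_nonneg_left h2 hdel1
        _ = (1 - del μ) ^ (k + 1) := by ring
  have htend : Filter.Tendsto (fun k : ℕ => (1 - del μ) ^ k) Filter.atTop (nhds 0) := by
    apply tendsto_pow_atTop_nhds_zero_of_lt_one
    · linarith [del_le_one μ hpos]
    · linarith [del_pos μ hpos]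
  have hle : Mx μ n y z a - mN μ n y z a ≤ 0 :=
    ge_of_tendsto' htend fun k => hbound k a han
  linarith [mN_le_Mx μ n y z a]

lemma cc_const (hpos : ∀ (G : Finset ℤ) (e : ℤ → E), 0 < μ (cylF G e))
    (hfield : ∀ a b : ℤ, a < b →
      CondIndep (cylSigma E {a, b}) (cylSigma E (Set.Ioo a b)) (cylSigma E (Set.Icc a b)ᶜ)
        (cylSigma_le E {a, b}) μ)
    (hstat : Measure.map (fun ω (n : ℤ) => ω (n + 1)) μ = μ)
    {n a : ℤ} (han : a < n) (y z : E) (u v : E) :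
    cc μ n y z a u = cc μ n y z a v := by
  have h := osc_zero μ hpos hfield hstat han y z
  have h1 := cc_le_Mx μ n y z a u
  have h2 := mN_le_cc μ n y z a v
  have h3 := cc_le_Mx μ n y z a v
  have h4 := mN_le_cc μ n y z a u
  linarith

end MFC

namespace MFC
set_option linter.unusedSectionVars false
variable {E : Type*} [Fintype E] [Nonempty E]
  [TopologicalSpace E] [DiscreteTopology E] [MeasurableSpace E] [BorelSpace E]
  (μ : Measure (ℤ → E)) [IsProbabilityMeasure μ]

lemma cc_glob
    (hpos : ∀ (G : Finset ℤ) (e : ℤ → E), 0 < μ (cylF G e))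
    (hfield : ∀ a b : ℤ, a < b →
      CondIndep (cylSigma E {a, b}) (cylSigma E (Set.Ioo a b)) (cylSigma E (Set.Icc a b)ᶜ)
        (cylSigma_le E {a, b}) μ)
    (hstat : Measure.map (fun ω (n : ℤ) => ω (n + 1)) μ = μ)
    {n a : ℤ} (han : a < n) (y z u : E) :
    (μ (pt a u ∩ pt n y ∩ pt (n + 1) z)).toReal * (μ (pt n y)).toReal
      = (μ (pt a u ∩ pt n y)).toReal * (μ (pt n y ∩ pt (n + 1) z)).toReal := by
  have hnum_eq : ∀ u' : E, (μ (pt a u' ∩ pt n y ∩ pt (n + 1) z)).toReal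
      = (μ (pt a u' ∩ pt n y)).toReal * cc μ n y z a u' := by
    intro u'
    have hden : 0 < (μ (pt a u' ∩ pt n y)).toReal := pos2 μ hpos (by omega) u' y
    rw [cc, mul_div_cancel₀ _ hden.ne']
  have h1 : (μ (pt n y ∩ pt (n + 1) z)).toReal
      = ∑ u' : E, (μ (pt a u' ∩ pt n y ∩ pt (n + 1) z)).toReal := by
    rw [toReal_fiber_sum μ (meas_pp n (n+1) y z) a]
    refine Finset.sum_congr rfl fun u' _ => ?_
    congr 2
    ext ω; simp only [Set.mem_inter_iff, pt, Set.mem_setOf_eq]; tauto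
  have h2 : (μ (pt n y)).toReal = ∑ u' : E, (μ (pt a u' ∩ pt n y)).toReal := by
    rw [toReal_fiber_sum μ (measurableSet_pt n y) a]
    refine Finset.sum_congr rfl fun u' _ => ?_
    congr 2
    ext ω; simp only [Set.mem_inter_iff, pt, Set.mem_setOf_eq]; tauto
  have h3 : (μ (pt n y ∩ pt (n + 1) z)).toReal = (μ (pt n y)).toReal * cc μ n y z a u := by
    rw [h1, h2, Finset.sum_mul]
    refine Finset.sum_congr rfl fun u' _ => ?_
    rw [hnum_eq u', cc_const μ hpos hfield hstat han y z u' u]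
  rw [hnum_eq u, h3]
  ring

lemma cylF_erase_min {F : Finset ℤ} (hF : F.Nonempty) (e : ℤ → E) :
    cylF (F.erase (F.min' hF)) e ∩ pt (F.min' hF) (e (F.min' hF)) = cylF F e := by
  ext ω
  simp only [Set.mem_inter_iff, cylF, pt, Set.mem_setOf_eq, Finset.mem_erase]
  constructor
  · rintro ⟨h1, h2⟩ k hk
    by_cases hka : k = F.min' hF
    · rw [hka]; exact h2
    · exact h1 k ⟨hka, hk⟩
  · intro h
    exact ⟨fun k hk => h k hk.2, h _ (F.min'_mem hF)⟩

/-- the final numeric identity -/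
lemma final_numeric
    (hpos : ∀ (G : Finset ℤ) (e : ℤ → E), 0 < μ (cylF G e))
    (hfield : ∀ a b : ℤ, a < b →
      CondIndep (cylSigma E {a, b}) (cylSigma E (Set.Ioo a b)) (cylSigma E (Set.Icc a b)ᶜ)
        (cylSigma_le E {a, b}) μ)
    (hstat : Measure.map (fun ω (n : ℤ) => ω (n + 1)) μ = μ)
    {n : ℤ} {F : Finset ℤ} (hF : ↑F ⊆ Set.Iio n) (e : ℤ → E) (y z : E) :
    (μ (pt n y)).toReal * (μ (cylF F e ∩ pt n y ∩ pt (n + 1) z)).toReal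
      = (μ (cylF F e ∩ pt n y)).toReal * (μ (pt n y ∩ pt (n + 1) z)).toReal := by
  rcases F.eq_empty_or_nonempty with rfl | hFne
  · have : cylF (∅ : Finset ℤ) e = (Set.univ : Set (ℤ → E)) := by ext ω; simp [cylF]
    rw [this]
    simp only [Set.univ_inter]
    try ring
  · set a := F.min' hFne with ha
    have haF : a ∈ F := F.min'_mem hFne
    have han : a < n := hF haF
    -- field identity at (a, n)
    have hs : MeasurableSet[cylSigma E (Set.Ioo a n)] (cylF (F.erase a) e) := by
      refine cylF_mem_cylSigma ?_ e
      intro k hk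
      rw [Finset.coe_erase] at hk
      obtain ⟨hkF, hka⟩ := hk
      have h1 : a ≤ k := F.min'_le k hkF
      have h2 : k < n := hF hkF
      have : k ≠ a := by simpa using hka
      exact Set.mem_Ioo.2 ⟨lt_of_le_of_ne h1 (Ne.symm this), h2⟩
    have ht : MeasurableSet[cylSigma E ((Set.Icc a n)ᶜ)] (pt (n + 1) z) :=
      pt_mem_cylSigma (by simp [Set.mem_Icc]) z
    have key := field_numeric μ hpos hfield han hs ht (e a) y
    have e1 : cylF (F.erase a) e ∩ pt (n + 1) z ∩ (pt a (e a) ∩ pt n y)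
        = cylF F e ∩ pt n y ∩ pt (n + 1) z := by
      rw [← cylF_erase_min hFne e, ← ha]
      ext ω; simp only [Set.mem_inter_iff, pt, Set.mem_setOf_eq]; tauto
    have e2 : cylF (F.erase a) e ∩ (pt a (e a) ∩ pt n y) = cylF F e ∩ pt n y := by
      rw [← cylF_erase_min hFne e, ← ha]
      ext ω; simp only [Set.mem_inter_iff, pt, Set.mem_setOf_eq]; tauto
    have e3 : pt (n + 1) z ∩ (pt a (e a) ∩ pt n y) = pt a (e a) ∩ pt n y ∩ pt (n + 1) z := by
      ext ω; simp only [Set.mem_inter_iff, pt, Set.mem_setOf_eq]; tauto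
    rw [e1, e2, e3] at key
    -- key : pr(pt a ea ∩ pt n y) * pr(cylF F e ∩ pt n y ∩ pt (n+1) z)
    --       = pr(cylF F e ∩ pt n y) * pr(pt a ea ∩ pt n y ∩ pt (n+1) z)
    have hglob := cc_glob μ hpos hfield hstat han y z (e a)
    have hpos_a : 0 < (μ (pt a (e a) ∩ pt n y)).toReal := pos2 μ hpos (by omega) (e a) y
    refine mul_left_cancel₀ hpos_a.ne' ?_
    calc (μ (pt a (e a) ∩ pt n y)).toReal
          * ((μ (pt n y)).toReal * (μ (cylF F e ∩ pt n y ∩ pt (n + 1) z)).toReal)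
        = (μ (pt n y)).toReal
            * ((μ (pt a (e a) ∩ pt n y)).toReal
              * (μ (cylF F e ∩ pt n y ∩ pt (n + 1) z)).toReal) := by ring
      _ = (μ (pt n y)).toReal
            * ((μ (cylF F e ∩ pt n y)).toReal
              * (μ (pt a (e a) ∩ pt n y ∩ pt (n + 1) z)).toReal) := by rw [key]
      _ = (μ (cylF F e ∩ pt n y)).toReal
            * ((μ (pt a (e a) ∩ pt n y ∩ pt (n + 1) z)).toReal * (μ (pt n y)).toReal) := by
          ring
      _ = (μ (cylF F e ∩ pt n y)).toReal
            * ((μ (pt a (e a) ∩ pt n y)).toReal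
              * (μ (pt n y ∩ pt (n + 1) z)).toReal) := by rw [hglob]
      _ = (μ (pt a (e a) ∩ pt n y)).toReal
            * ((μ (cylF F e ∩ pt n y)).toReal * (μ (pt n y ∩ pt (n + 1) z)).toReal) := by
          ring
end MFC

namespace MFC
set_option linter.unusedSectionVars false
variable {E : Type*} [Fintype E] [Nonempty E]
  [TopologicalSpace E] [DiscreteTopology E] [MeasurableSpace E] [BorelSpace E]

/-- the π-system of cylinders with coordinates in S -/
def cylPi (E : Type*) [MeasurableSpace E] (S : Set ℤ) : Set (Set (ℤ → E)) :=
  {C | ∃ (F : Finset ℤ) (e : ℤ → E), ↑F ⊆ S ∧ C = cylF F e}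

lemma isPiSystem_cylPi (S : Set ℤ) : IsPiSystem (cylPi E S) := by
  rintro _ ⟨F₁, e₁, hF₁, rfl⟩ _ ⟨F₂, e₂, hF₂, rfl⟩ hne
  obtain ⟨ω₀, hω₁, hω₂⟩ := hne
  refine ⟨F₁ ∪ F₂, fun k => if k ∈ F₁ then e₁ k else e₂ k, ?_, ?_⟩
  · intro k hk
    simp only [Finset.coe_union, Set.mem_union] at hk
    rcases hk with h | h
    · exact hF₁ h
    · exact hF₂ h
  · ext ω
    simp only [Set.mem_inter_iff, cylF, Set.mem_setOf_eq, Finset.mem_union]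
    constructor
    · rintro ⟨h1, h2⟩ k hk
      by_cases hk1 : k ∈ F₁
      · simp [hk1, h1 k hk1]
      · simp [hk1, h2 k (hk.resolve_left hk1)]
    · intro h
      constructor
      · intro k hk
        have := h k (Or.inl hk); simpa [hk] using this
      · intro k hk
        by_cases hk1 : k ∈ F₁
        · have := h k (Or.inl hk1)
          simp only [if_pos hk1] at this
          rw [this]
          have h1 := hω₁ k hk1
          have h2 := hω₂ k hk
          rw [← h1, h2]
        · have := h k (Or.inr hk); simpa [hk1] using this

lemma cylSigma_eq_generateFrom (S : Set ℤ) :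
    cylSigma E S = MeasurableSpace.generateFrom (cylPi E S) := by
  apply le_antisymm
  · -- cylSigma ≤ generateFrom
    rw [cylSigma]
    have hpi : (MeasurableSpace.pi : MeasurableSpace (S → E))
        = ⨆ i : S, MeasurableSpace.comap (fun σ : S → E => σ i) ‹MeasurableSpace E› := rfl
    rw [hpi, MeasurableSpace.comap_iSup]
    refine iSup_le fun i => ?_
    rw [MeasurableSpace.comap_comp]
    intro t ht
    obtain ⟨u, -, rfl⟩ := ht
    have : ((fun σ : S → E => σ i) ∘ fun ω (i : S) => ω (i : ℤ)) ⁻¹' u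
        = ⋃ x ∈ u, pt (i : ℤ) x := by
      ext ω; simp [pt, Function.comp]
    rw [this]
    refine MeasurableSet.biUnion u.to_countable fun x _ => ?_
    exact MeasurableSpace.measurableSet_generateFrom
      ⟨{(i : ℤ)}, fun _ => x, by simpa using i.2, by rw [cylF_single]⟩
  · refine MeasurableSpace.generateFrom_le ?_
    rintro _ ⟨F, e, hF, rfl⟩
    exact cylF_mem_cylSigma hF e

end MFC

open MeasureTheory ProbabilityTheory

/-- For a stationary, strictly positive stochastic process `(X_n)_{n ∈ ℤ}` with values
in a finite set `E`, the (local) Markov field property on `ℤ` — the inside of every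
finite interval is conditionally independent of the outside given the two boundary
sites — implies the Markov chain property: `X_{n+1}` is conditionally independent of
the past `(X_k)_{k < n}` given `X_n`. -/
theorem markov_field_implies_markov_chain
    {E : Type*} [Fintype E] [Nonempty E]
    [TopologicalSpace E] [DiscreteTopology E] [MeasurableSpace E] [BorelSpace E]
    (μ : Measure (ℤ → E)) [IsProbabilityMeasure μ]
    (hstat : Measure.map (fun ω (n : ℤ) => ω (n + 1)) μ = μ)
    (hpos : ∀ a b : ℤ, a ≤ b → ∀ e : ℤ → E,
      0 < μ {ω | ∀ k ∈ Finset.Icc a b, ω k = e k})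
    (hfield : ∀ a b : ℤ, a < b →
      CondIndep (cylSigma E {a, b}) (cylSigma E (Set.Ioo a b)) (cylSigma E (Set.Icc a b)ᶜ)
        (cylSigma_le E {a, b}) μ) :
    ∀ n : ℤ, CondIndep (cylSigma E {n}) (cylSigma E {n + 1}) (cylSigma E (Set.Iio n))
        (cylSigma_le E {n}) μ := by
  intro n
  -- positivity of all finite cylinders
  have hpos' : ∀ (G : Finset ℤ) (e : ℤ → E), 0 < μ (MFC.cylF G e) := by
    intro G e
    rcases G.eq_empty_or_nonempty with rfl | hG
    · have : MFC.cylF (∅ : Finset ℤ) e = (Set.univ : Set (ℤ → E)) := by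
        ext ω; simp [MFC.cylF]
      rw [this]
      simp
    · have hab : G.min' hG ≤ G.max' hG := G.min'_le _ (G.max'_mem hG)
      have hsub : {ω : ℤ → E | ∀ k ∈ Finset.Icc (G.min' hG) (G.max' hG), ω k = e k}
          ⊆ MFC.cylF G e := by
        intro ω hω k hk
        exact hω k (Finset.mem_Icc.2 ⟨G.min'_le k hk, G.le_max' k hk⟩)
      exact lt_of_lt_of_le (hpos _ _ hab e) (measure_mono hsub)
  refine ProbabilityTheory.CondIndepSets.condIndep (cylSigma_le E _) (cylSigma_le E _)
    (MFC.isPiSystem_cylPi {n + 1}) (MFC.isPiSystem_cylPi (Set.Iio n))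
    (MFC.cylSigma_eq_generateFrom {n + 1}) (MFC.cylSigma_eq_generateFrom (Set.Iio n)) ?_
  refine (condIndepSets_iff _ _ _ _ ?_ ?_ μ).mpr ?_
  · rintro _ ⟨F, e, -, rfl⟩; exact MFC.measurableSet_cylF F e
  · rintro _ ⟨F, e, -, rfl⟩; exact MFC.measurableSet_cylF F e
  rintro _ _ ⟨F₁, e₁, hF₁, rfl⟩ ⟨F₂, e₂, hF₂, rfl⟩
  have hset : ({n} : Set ℤ) = (↑({n} : Finset ℤ) : Set ℤ) := by simp
  rw [hset]
  refine (MFC.condexp_product_iff μ hpos' ({n} : Finset ℤ)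
    (MFC.measurableSet_cylF F₁ e₁) (MFC.measurableSet_cylF F₂ e₂)).mpr ?_
  intro e0
  rw [MFC.cylF_single]
  have hF₁' : F₁ ⊆ ({n + 1} : Finset ℤ) := by
    intro k hk
    have := hF₁ hk
    simpa using this
  rcases Finset.subset_singleton_iff.mp hF₁' with rfl | rfl
  · have huniv : MFC.cylF (∅ : Finset ℤ) e₁ = (Set.univ : Set (ℤ → E)) := by
      ext ω; simp [MFC.cylF]
    rw [huniv]
    simp only [Set.univ_inter]
  · rw [MFC.cylF_single]
    have r1 : MFC.pt (n + 1) (e₁ (n + 1)) ∩ MFC.cylF F₂ e₂ ∩ MFC.pt n (e0 n)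
        = MFC.cylF F₂ e₂ ∩ MFC.pt n (e0 n) ∩ MFC.pt (n + 1) (e₁ (n + 1)) := by
      ext ω; simp only [Set.mem_inter_iff, MFC.pt, Set.mem_setOf_eq]; tauto
    have r2 : MFC.pt (n + 1) (e₁ (n + 1)) ∩ MFC.pt n (e0 n)
        = MFC.pt n (e0 n) ∩ MFC.pt (n + 1) (e₁ (n + 1)) := by
      ext ω; simp only [Set.mem_inter_iff, MFC.pt, Set.mem_setOf_eq]; tauto
    rw [r1, r2]
    have := MFC.final_numeric μ hpos' hfield hstat hF₂ e₂ (e0 n) (e₁ (n + 1))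
    linarith [this]
end

section
/- For a uniformly absolutely summable interaction Φ and inverse temperature β > 0, the Gibbs specification kernels γ_Λ(σ_Λ | ω) = exp(−β H_Λ(σ_Λ|ω)) / Z_Λ(ω) are quasilocal: for each finite Λ and each local configuration σ_Λ, the map ω ↦ γ_Λ(σ_Λ | ω) is a continuous function of the boundary configuration ω in the product topology. -/
open scoped BigOperators

noncomputable section

/-- The configuration agreeing with the local configuration `ζ ∈ E^Λ` on `Λ` and with
the boundary condition `ω` outside `Λ`. -/
def fill {E : Type*} (Λ : Finset ℤ) (ζ : {i : ℤ // i ∈ Λ} → E) (ω : ℤ → E) : ℤ → E :=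
  fun i => if h : i ∈ Λ then ζ ⟨i, h⟩ else ω i

/-- The Hamiltonian in volume `Λ` with boundary condition `ω`:
`H_Λ(ζ|ω) = Σ_{A ∩ Λ ≠ ∅} Φ_A(ζ_Λ ω_{Λᶜ})`. -/
def hamiltonian {E : Type*} (Φ : Finset ℤ → (ℤ → E) → ℝ) (Λ : Finset ℤ)
    (ζ : {i : ℤ // i ∈ Λ} → E) (ω : ℤ → E) : ℝ :=
  ∑' A : {A : Finset ℤ // (A ∩ Λ).Nonempty}, Φ A.1 (fill Λ ζ ω)

/-- The partition function `Z_Λ(ω) = Σ_{ζ ∈ E^Λ} exp(−β H_Λ(ζ|ω))`. -/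
def partitionFunction {E : Type*} [Fintype E] (Φ : Finset ℤ → (ℤ → E) → ℝ) (β : ℝ)
    (Λ : Finset ℤ) (ω : ℤ → E) : ℝ :=
  ∑ ζ : {i : ℤ // i ∈ Λ} → E, Real.exp (-β * hamiltonian Φ Λ ζ ω)

/-- The Gibbs specification kernel
`γ_Λ(ζ|ω) = exp(−β H_Λ(ζ|ω)) / Z_Λ(ω)`. -/
def gibbsKernel {E : Type*} [Fintype E] (Φ : Finset ℤ → (ℤ → E) → ℝ) (β : ℝ)
    (Λ : Finset ℤ) (ζ : {i : ℤ // i ∈ Λ} → E) (ω : ℤ → E) : ℝ :=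
  Real.exp (-β * hamiltonian Φ Λ ζ ω) / partitionFunction Φ β Λ ω

/-- For a uniformly absolutely summable interaction `Φ` and inverse temperature
`β > 0`, the Gibbs specification kernels are quasilocal: for each finite `Λ` and each
local configuration `ζ ∈ E^Λ`, the map `ω ↦ γ_Λ(ζ|ω)` is a continuous function of
the boundary configuration `ω` in the product topology. -/
theorem gibbsKernel_continuous
    {E : Type*} [Fintype E] [TopologicalSpace E] [DiscreteTopology E]
    (Φ : Finset ℤ → (ℤ → E) → ℝ)
    (hloc : ∀ (A : Finset ℤ) (σ ω : ℤ → E), (∀ i ∈ A, σ i = ω i) → Φ A σ = Φ A ω)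
    (hUAS : ∀ i : ℤ, Summable fun A : {A : Finset ℤ // i ∈ A} => ⨆ ω, |Φ A.1 ω|)
    (β : ℝ) (hβ : 0 < β)
    (Λ : Finset ℤ) (ζ : {i : ℤ // i ∈ Λ} → E) :
    Continuous fun ω : ℤ → E => gibbsKernel Φ β Λ ζ ω := by
  classical
  rcases isEmpty_or_nonempty E with hE | hE
  · exact continuous_iff_continuousAt.mpr fun ω => isEmptyElim ω
  · -- each term is continuous (depends on finitely many coordinates)
    have hterm : ∀ (A : Finset ℤ) (ζ' : {i : ℤ // i ∈ Λ} → E),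
        Continuous fun ω : ℤ → E => Φ A (fill Λ ζ' ω) := by
      intro A ζ'
      have hfac : (fun ω : ℤ → E => Φ A (fill Λ ζ' ω)) =
          (fun x : {i : ℤ // i ∈ A} → E =>
            Φ A (fill Λ ζ' (fun i => if h : i ∈ A then x ⟨i, h⟩ else Classical.arbitrary E))) ∘
          (fun ω : ℤ → E => fun i : {i : ℤ // i ∈ A} => ω i.1) := by
        funext ω
        simp only [Function.comp]
        apply hloc
        intro i hi
        by_cases hΛ : i ∈ Λ <;> simp [fill, hΛ, hi]
      rw [hfac]
      exact continuous_of_discreteTopology.comp (continuous_pi fun i => continuous_apply i.1)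
    -- each |Φ A| has bounded (indeed finite) range
    have hbdd : ∀ A : Finset ℤ, BddAbove (Set.range fun ω : ℤ → E => |Φ A ω|) := by
      intro A
      apply Set.Finite.bddAbove
      apply (Set.finite_range fun x : {i : ℤ // i ∈ A} → E =>
        |Φ A (fun i => if h : i ∈ A then x ⟨i, h⟩ else Classical.arbitrary E)|).subset
      rintro _ ⟨ω, rfl⟩
      exact ⟨fun i => ω i.1, by
        dsimp only
        rw [hloc A (fun i => if h : i ∈ A then ω i else Classical.arbitrary E) ω
          (fun i hi => by simp [hi])]⟩
    have hle : ∀ (A : Finset ℤ) (σ : ℤ → E), |Φ A σ| ≤ ⨆ ω, |Φ A ω| :=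
      fun A σ => le_ciSup (hbdd A) σ
    have hnn : ∀ A : Finset ℤ, 0 ≤ ⨆ ω, |Φ A ω| :=
      fun A => Real.iSup_nonneg fun ω => abs_nonneg _
    -- summability of the sup bound over the relevant sets
    have hsum : Summable fun A : {A : Finset ℤ // (A ∩ Λ).Nonempty} => ⨆ ω, |Φ A.1 ω| := by
      have h1 : ∀ i : ℤ, Summable (Set.indicator {B : Finset ℤ | i ∈ B}
          (fun A => ⨆ ω, |Φ A ω|)) := by
        intro i
        rw [← summable_subtype_iff_indicator]
        exact hUAS i
      have h2 : Summable fun A : Finset ℤ =>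
          ∑ i ∈ Λ, Set.indicator {B : Finset ℤ | i ∈ B} (fun A => ⨆ ω, |Φ A ω|) A :=
        summable_sum fun i _ => h1 i
      refine (summable_subtype_iff_indicator
        (s := {B : Finset ℤ | (B ∩ Λ).Nonempty}) (f := fun A => ⨆ ω, |Φ A ω|)).mpr ?_
      apply Summable.of_nonneg_of_le _ _ h2
      · intro A
        exact Set.indicator_nonneg (fun A _ => hnn A) A
      · intro A
        by_cases hA : A ∈ {B : Finset ℤ | (B ∩ Λ).Nonempty}
        · rw [Set.indicator_of_mem hA]
          obtain ⟨i, hi⟩ := hA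
          rw [Finset.mem_inter] at hi
          have heq : (⨆ ω, |Φ A ω|) = Set.indicator {B : Finset ℤ | i ∈ B}
              (fun A => ⨆ ω, |Φ A ω|) A :=
            (Set.indicator_of_mem (show A ∈ {B : Finset ℤ | i ∈ B} from hi.1) (fun A => ⨆ ω, |Φ A ω|)).symm
          rw [heq]
          exact Finset.single_le_sum
            (f := fun j : ℤ => Set.indicator {B : Finset ℤ | j ∈ B}
              (fun A => ⨆ ω, |Φ A ω|) A)
            (fun j _ => Set.indicator_nonneg (fun B _ => hnn B) A) hi.2
        · rw [Set.indicator_of_notMem hA]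
          exact Finset.sum_nonneg fun j _ => Set.indicator_nonneg (fun B _ => hnn B) A
    -- the Hamiltonian is continuous
    have hH : ∀ ζ' : {i : ℤ // i ∈ Λ} → E,
        Continuous fun ω : ℤ → E => hamiltonian Φ Λ ζ' ω := by
      intro ζ'
      apply continuous_tsum (fun A => hterm A.1 ζ') hsum
      intro A ω
      rw [Real.norm_eq_abs]
      exact hle A.1 _
    have hexp : ∀ ζ' : {i : ℤ // i ∈ Λ} → E,
        Continuous fun ω : ℤ → E => Real.exp (-β * hamiltonian Φ Λ ζ' ω) :=
      fun ζ' => Real.continuous_exp.comp (continuous_const.mul (hH ζ'))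
    have hZ : Continuous fun ω : ℤ → E => partitionFunction Φ β Λ ω :=
      continuous_finset_sum _ fun ζ' _ => hexp ζ'
    have hZpos : ∀ ω : ℤ → E, partitionFunction Φ β Λ ω ≠ 0 := by
      intro ω
      have : 0 < partitionFunction Φ β Λ ω :=
        Finset.sum_pos (fun ζ' _ => Real.exp_pos _) Finset.univ_nonempty
      exact this.ne'
    exact (hexp ζ).div hZ hZpos

end
end
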